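/- Let X be a finite nonempty set and let <₁, <₂, …, <_{n+1} be n+1 linear order relations on X. Let 𝓕 be the family of all subsets A ⊆ X for which there exist s₁, …, s_{n+1} ∈ X with A = {t ∈ X : t ≤₁ s₁, t ≤₂ s₂, …, t ≤_{n+1} s_{n+1}}. Then 𝔣𝔯(𝓕) ≤ n. -/

import Mathlib

open Cardinal

noncomputable section

/-- The underlying set of the ordinal `ω_n`, the least ordinal of cardinality `ℵ_n`,
realized as a type. -/
abbrev OmegaN (n : ℕ) : Type := ((Cardinal.aleph n).ord).ToType

/-- `n` is *free* for the family `𝓕` of finite sets: for every set mapping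
`S : [ω_n]^{<ω} → [ω_n]^{<ω}` there is a bijection `u` from `⋃ 𝓕` onto a subset
`Y = u '' (⋃ 𝓕)` of `ω_n` such that `S (u '' A) ∩ Y ⊆ u '' A` for all `A ∈ 𝓕`. -/
def IsFree {α : Type*} [DecidableEq α] (𝓕 : Finset (Finset α)) (n : ℕ) : Prop :=
  ∀ S : Finset (OmegaN n) → Finset (OmegaN n),
    ∃ u : α → OmegaN n, Set.InjOn u ↑(𝓕.sup id) ∧
      ∀ A ∈ 𝓕, S (A.image u) ∩ (𝓕.sup id).image u ⊆ A.image u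

/-- The index `𝔣𝔯 𝓕`: the least `n` which is free for `𝓕`. -/
noncomputable def fr {α : Type*} [DecidableEq α] (𝓕 : Finset (Finset α)) : ℕ :=
  sInf {n | IsFree 𝓕 n}

/-- Conditions (1)–(4) of a nested-orders family on `X`,
where a sequence `(t₁, …, t_k)` is represented by the list `[t₁, …, t_k]`. -/
def NestedBase {α : Type*} (X : Set α) (S : Set (List α)) : Prop :=
  (∀ l ∈ S, ∀ x ∈ l, x ∈ X) ∧
  (∀ t ∈ X, [t] ∈ S) ∧
  (∀ l ∈ S, l.Nodup) ∧
  (∀ (l : List α) (t : α), l ++ [t] ∈ S → l ∈ S) ∧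
  (∀ (l : List α) (s t : α), l ++ [s, t] ∈ S → l ++ [t] ∈ S) ∧
  (∀ (l : List α) (s t u : α), l ++ [s, t] ∈ S → l ++ [t, u] ∈ S → l ++ [s, u] ∈ S)

/-- A nested-orders family on `X`: conditions (1)–(5). -/
def IsNestedOrders {α : Type*} (X : Set α) (S : Set (List α)) : Prop :=
  NestedBase X S ∧
  ∀ (l : List α) (s t : α), l ++ [t] ∈ S → l ++ [s] ∈ S → t ≠ s →
    (l ++ [t, s] ∈ S ∨ l ++ [s, t] ∈ S)

/-- An `n`-nested-orders family on `X`: sequences of length at most `n+2`,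
conditions (1)–(4), and condition (5) for `k < n`. -/
def IsNNestedOrders {α : Type*} (n : ℕ) (X : Set α) (S : Set (List α)) : Prop :=
  NestedBase X S ∧
  (∀ l ∈ S, l.length ≤ n + 2) ∧
  ∀ (l : List α) (s t : α), l.length < n → l ++ [t] ∈ S → l ++ [s] ∈ S → t ≠ s →
    (l ++ [t, s] ∈ S ∨ l ++ [s, t] ∈ S)

/-- `A` satisfies the defining condition of membership in `𝓕_{𝔖,n}`: whenever
`(t₁, …, t_{n+2}) ∈ 𝔖` and `t₁, …, t_{n+1} ∈ A`, also `t_{n+2} ∈ A`. -/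
def MemFam {α : Type*} (n : ℕ) (S : Set (List α)) (A : Finset α) : Prop :=
  ∀ (l : List α) (t : α), l.length = n + 1 → l ++ [t] ∈ S →
    (∀ x ∈ l, x ∈ A) → t ∈ A

/-- The index `𝔫𝔬 𝓕`: the least `n` for which there is an `n`-nested-orders family `𝔖`
on `⋃ 𝓕` with `𝓕 ⊆ 𝓕_{𝔖,n}`. -/
noncomputable def no {α : Type*} [DecidableEq α] (𝓕 : Finset (Finset α)) : ℕ :=
  sInf {n | ∃ S : Set (List α),
    IsNNestedOrders n ↑(𝓕.sup id) S ∧ ∀ A ∈ 𝓕, MemFam n S A}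

open Cardinal Set

namespace Statement14Aux

variable {Ω : Type} (S : Finset Ω → Finset Ω)

/-- `B` is closed under the set mapping `S`. -/
def SClosed (B : Set Ω) : Prop := ∀ F : Finset Ω, ↑F ⊆ B → ↑(S F) ⊆ B

def iterCl (B : Set Ω) : ℕ → Set Ω
  | 0 => B
  | k + 1 => iterCl B k ∪ ⋃ (F : Finset Ω) (_ : ↑F ⊆ iterCl B k), (S F : Set Ω)

/-- Closure of `B` under `S`. -/
def cl (B : Set Ω) : Set Ω := ⋃ k, iterCl S B k

lemma iterCl_mono (B : Set Ω) : Monotone (iterCl S B) :=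
  monotone_nat_of_le_succ fun _ => Set.subset_union_left

lemma subset_cl (B : Set Ω) : B ⊆ cl S B := Set.subset_iUnion (iterCl S B) 0

lemma sclosed_cl (B : Set Ω) : SClosed S (cl S B) := by
  classical
  intro F hF
  have key : ∀ G : Finset Ω, ↑G ⊆ cl S B → ∃ k, (G : Set Ω) ⊆ iterCl S B k := by
    intro G
    induction G using Finset.induction with
    | empty => intro _; exact ⟨0, by simp⟩
    | @insert x G hx ih =>
      intro h
      obtain ⟨k1, hk1⟩ := ih (by
        intro y hy; exact h (by simpa using Or.inr hy))
      have hxcl : x ∈ cl S B := h (by simp)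
      obtain ⟨k2, hk2⟩ := Set.mem_iUnion.1 hxcl
      refine ⟨max k1 k2, ?_⟩
      intro y hy
      rcases Finset.mem_insert.1 (by simpa using hy) with rfl | hyG
      · exact iterCl_mono S B (le_max_right k1 k2) hk2
      · exact iterCl_mono S B (le_max_left k1 k2) (hk1 hyG)
  obtain ⟨k, hk⟩ := key F hF
  intro y hy
  apply Set.mem_iUnion.2 ⟨k + 1, ?_⟩
  exact Or.inr (Set.mem_iUnion.2 ⟨F, Set.mem_iUnion.2 ⟨hk, hy⟩⟩)

lemma mk_finset_subsets_le (A : Set Ω) (c : Cardinal) (hc : ℵ₀ ≤ c) (hA : #A ≤ c) :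
    #{F : Finset Ω // ↑F ⊆ A} ≤ c := by
  classical
  have hsurj : Function.Surjective
      (fun G : Finset A => (⟨G.image Subtype.val, by
        intro y hy
        obtain ⟨z, _, rfl⟩ := Finset.mem_image.1 (by exact_mod_cast hy)
        exact z.2⟩ : {F : Finset Ω // ↑F ⊆ A})) := by
    rintro ⟨F, hF⟩
    refine ⟨F.attach.image (fun x => (⟨x.1, hF x.2⟩ : A)), ?_⟩
    ext y
    simp only [Finset.image_image, Finset.mem_image, Finset.mem_attach]
    constructor
    · rintro ⟨z, _, rfl⟩; exact z.2
    · intro hy; exact ⟨⟨y, hy⟩, trivial, rfl⟩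
  have h1 : #{F : Finset Ω // ↑F ⊆ A} ≤ #(Finset A) := mk_le_of_surjective hsurj
  refine h1.trans ?_
  rcases finite_or_infinite A with hfin | hinf
  · haveI := hfin
    haveI := Fintype.ofFinite A
    exact le_trans (lt_aleph0_of_finite (Finset A)).le hc
  · rw [mk_finset_of_infinite]
    exact hA

lemma mk_iterCl_le (B : Set Ω) (c : Cardinal) (hc : ℵ₀ ≤ c) (hB : #B ≤ c) :
    ∀ k, #(iterCl S B k) ≤ c := by
  intro k
  induction k with
  | zero => exact hB
  | succ k ih =>
    have hbig : #(⋃ (F : Finset Ω) (_ : ↑F ⊆ iterCl S B k), (S F : Set Ω)) ≤ c := by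
      have heq : (⋃ (F : Finset Ω) (_ : ↑F ⊆ iterCl S B k), (S F : Set Ω))
          = ⋃ (F : {F : Finset Ω // ↑F ⊆ iterCl S B k}), ((S F.1 : Finset Ω) : Set Ω) := by
        ext y; simp
      rw [heq]
      refine le_trans (mk_iUnion_le _) ?_
      have h1 : #{F : Finset Ω // ↑F ⊆ iterCl S B k} ≤ c :=
        mk_finset_subsets_le _ c hc ih
      have h2 : ⨆ (F : {F : Finset Ω // ↑F ⊆ iterCl S B k}), #((S F.1 : Finset Ω) : Set Ω) ≤ ℵ₀ := by
        apply ciSup_le'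
        intro F
        exact (lt_aleph0_of_finite _).le
      calc #{F : Finset Ω // ↑F ⊆ iterCl S B k} * ⨆ (F : {F : Finset Ω // ↑F ⊆ iterCl S B k}),
            #((S F.1 : Finset Ω) : Set Ω) ≤ c * ℵ₀ := mul_le_mul' h1 h2
        _ ≤ c * c := mul_le_mul' le_rfl hc
        _ = c := mul_eq_self hc
    calc #(iterCl S B (k + 1)) ≤ #(iterCl S B k) + _ := mk_union_le _ _
      _ ≤ c + c := add_le_add ih hbig
      _ = c := add_eq_self hc

lemma mk_cl_le (B : Set Ω) (c : Cardinal) (hc : ℵ₀ ≤ c) (hB : #B ≤ c) :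
    #(cl S B) ≤ c := by
  refine le_trans (mk_iUnion_le _) ?_
  calc #ℕ * ⨆ k, #(iterCl S B k) ≤ ℵ₀ * c := by
        refine mul_le_mul' (by simp) (ciSup_le' fun k => mk_iterCl_le S B c hc hB k)
    _ ≤ c * c := mul_le_mul' hc le_rfl
    _ = c := mul_eq_self hc


lemma exists_fresh (c : Cardinal) (_hc : ℵ₀ ≤ c) (T B : Set Ω)
    (hT : c + c < #T) (hB : #B ≤ c) :
    ∃ U : Set Ω, U ⊆ T \ B ∧ #U = c := by
  have hsub : T ⊆ (T \ B) ∪ B := by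
    intro x hx
    by_cases hxB : x ∈ B
    · exact Or.inr hxB
    · exact Or.inl ⟨hx, hxB⟩
  have h1 : c ≤ #(T \ B : Set Ω) := by
    by_contra h
    push_neg at h
    have h2 : #T ≤ #(T \ B : Set Ω) + #B :=
      le_trans (mk_le_mk_of_subset hsub) (mk_union_le _ _)
    exact absurd (h2.trans (add_le_add h.le hB)) (not_le.2 hT)
  obtain ⟨U, hU1, hU2⟩ := Cardinal.le_mk_iff_exists_subset.1 h1
  exact ⟨U, hU1, hU2⟩

lemma grid (k : ℕ) : ∀ (ι : Type) [Countable ι] (T : ι → Set Ω),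
    (∀ l, Cardinal.aleph k ≤ #(T l)) →
    ∃ K : Fin k → ℕ → Set Ω,
      (∀ i, Monotone (K i)) ∧ (∀ i j, SClosed S (K i j)) ∧
      (∀ (f : Fin k → ℕ) (l : ι),
        ((⋂ i, (K i (f i + 1) \ K i (f i))) ∩ T l).Infinite) := by
  induction k with
  | zero =>
    intro ι _ T hT
    refine ⟨Fin.elim0, fun i => i.elim0, fun i => i.elim0, ?_⟩
    intro f l
    rw [Set.iInter_of_empty, Set.univ_inter, ← Set.infinite_coe_iff, ← aleph0_le_mk_iff]
    exact le_trans (by simp [aleph_zero]) (hT l)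
  | succ k ih =>
    intro ι _ T hT
    set c := Cardinal.aleph k
    have hcinf : ℵ₀ ≤ c := aleph0_le_aleph _
    have hTbig : ∀ l, c + c < #(T l) := by
      intro l
      rw [add_eq_self hcinf]
      refine lt_of_lt_of_le ?_ (hT l)
      exact aleph_lt_aleph.2 (by exact_mod_cast Nat.lt_succ_self k)
    -- fresh set extractor
    have hch : ∀ B : Set Ω, ∃ U : ι → Set Ω, #B ≤ c →
        ∀ l, U l ⊆ T l \ B ∧ #(U l) = c := by
      intro B
      by_cases hB : #B ≤ c
      · choose U hU1 hU2 using fun l => exists_fresh c hcinf (T l) B (hTbig l) hB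
        exact ⟨U, fun _ l => ⟨hU1 l, hU2 l⟩⟩
      · exact ⟨fun _ => ∅, fun h => absurd h hB⟩
    choose U hU using hch
    -- the chain
    let C : ℕ → Set Ω := fun j =>
      Nat.rec (cl S ∅) (fun _ Bj => cl S (Bj ∪ ⋃ l, U Bj l)) j
    have hC0 : C 0 = cl S ∅ := rfl
    have hCsucc : ∀ j, C (j + 1) = cl S (C j ∪ ⋃ l, U (C j) l) := fun j => rfl
    have hCsize : ∀ j, #↥(C j) ≤ c := by
      intro j
      induction j with
      | zero => exact mk_cl_le S _ c hcinf (by simp)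
      | succ j ihj =>
        rw [hCsucc]
        refine mk_cl_le S _ c hcinf ?_
        have hUb : #(⋃ l, U (C j) l) ≤ c := by
          refine le_trans (mk_iUnion_le _) ?_
          have h1 : #ι ≤ ℵ₀ := mk_le_aleph0
          have h2 : ⨆ l, #(U (C j) l) ≤ c :=
            ciSup_le' fun l => ((hU (C j) ihj l).2).le
          calc #ι * ⨆ l, #(U (C j) l) ≤ ℵ₀ * c := mul_le_mul' h1 h2
            _ ≤ c * c := mul_le_mul' hcinf le_rfl
            _ = c := mul_eq_self hcinf
        calc #(C j ∪ ⋃ l, U (C j) l : Set Ω) ≤ #↥(C j) + _ := mk_union_le _ _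
          _ ≤ c + c := add_le_add ihj hUb
          _ = c := add_eq_self hcinf
    have hCclosed : ∀ j, SClosed S (C j) := by
      intro j
      cases j with
      | zero => exact sclosed_cl S _
      | succ j => rw [hCsucc]; exact sclosed_cl S _
    have hCmono : Monotone C := by
      refine monotone_nat_of_le_succ fun j => ?_
      rw [hCsucc]
      exact le_trans Set.subset_union_left (subset_cl S _)
    have hfresh : ∀ j l, U (C j) l ⊆ T l \ C j ∧ #(U (C j) l) = c :=
      fun j l => hU (C j) (hCsize j) l
    have hfreshsub : ∀ j l, U (C j) l ⊆ C (j + 1) := by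
      intro j l
      rw [hCsucc]
      exact le_trans (le_trans (Set.subset_iUnion _ l) Set.subset_union_right) (subset_cl S _)
    -- recursive call
    obtain ⟨K', hK'mono, hK'cl, hK'cell⟩ := ih (ℕ × ι) (fun p => U (C p.1) p.2)
      (by
        intro p
        rw [(hfresh p.1 p.2).2])
    refine ⟨Fin.snoc K' C, ?_, ?_, ?_⟩
    · intro i
      induction i using Fin.lastCases with
      | last => simpa [Fin.snoc_last] using hCmono
      | cast i => simpa [Fin.snoc_castSucc] using hK'mono i
    · intro i j
      induction i using Fin.lastCases with
      | last => simpa [Fin.snoc_last] using hCclosed j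
      | cast i => simpa [Fin.snoc_castSucc] using hK'cl i j
    · intro f l
      set j := f (Fin.last k) with hj
      have hcell := hK'cell (fun i => f i.castSucc) (j, l)
      refine hcell.mono ?_
      rintro x ⟨hx1, hx2⟩
      have hxTl : x ∈ T l \ C j := (hfresh j l).1 hx2
      constructor
      · rw [Set.mem_iInter]
        intro i
        induction i using Fin.lastCases with
        | last =>
          rw [Fin.snoc_last, ← hj]
          exact ⟨hfreshsub j l hx2, hxTl.2⟩
        | cast i =>
          rw [Fin.snoc_castSucc]
          exact Set.mem_iInter.1 hx1 i
      · exact hxTl.1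


noncomputable def posOf {α : Type*} [Fintype α] (L : LinearOrder α) (p : α) : ℕ :=
  ({q | L.lt q p}).ncard

lemma posOf_lt_posOf {α : Type*} [Fintype α] (L : LinearOrder α) {p q : α}
    (h : L.lt q p) : posOf L q < posOf L p := by
  letI := L
  apply Set.ncard_lt_ncard
  · constructor
    · intro t ht
      exact lt_trans ht h
    · intro hsub
      exact absurd (hsub (Set.mem_setOf.2 h)) (lt_irrefl q)
  · exact Set.toFinite _

lemma posOf_inj {α : Type*} [Fintype α] (L : LinearOrder α) {p q : α}
    (h : posOf L p = posOf L q) : p = q := by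
  letI := L
  rcases lt_trichotomy p q with h1 | h1 | h1
  · exact absurd h (Nat.ne_of_lt (posOf_lt_posOf L h1))
  · exact h1
  · exact absurd h.symm (Nat.ne_of_lt (posOf_lt_posOf L h1))

lemma posOf_lt_card {α : Type*} [Fintype α] (L : LinearOrder α) (p : α) :
    posOf L p < Fintype.card α := by
  letI := L
  rw [← Nat.card_eq_fintype_card, ← Set.ncard_univ]
  apply Set.ncard_lt_ncard
  · constructor
    · exact Set.subset_univ _
    · intro hsub
      exact absurd (hsub (Set.mem_univ p)) (lt_irrefl p)
  · exact Set.finite_univ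


end Statement14Aux

/-- Intersections of initial segments of `n+1` linear orders on a finite nonempty set:
if `𝓕` is the family of all sets of the form `{t : t ≤₁ s₁, …, t ≤_{n+1} s_{n+1}}`,
then `𝔣𝔯 𝓕 ≤ n`. -/
theorem statement14 {α : Type*} [Fintype α] [Nonempty α] [DecidableEq α] (n : ℕ)
    (r : Fin (n + 1) → LinearOrder α) (𝓕 : Finset (Finset α))
    (h𝓕 : ∀ A : Finset α, A ∈ 𝓕 ↔
      ∃ s : Fin (n + 1) → α, ∀ t : α, (t ∈ A ↔ ∀ i, (r i).le t (s i))) :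
    fr 𝓕 ≤ n := by
  classical
  have hfree : IsFree 𝓕 n := by
    intro S
    haveI hinf : Infinite (OmegaN n) := by
      rw [Cardinal.infinite_iff, Cardinal.mk_ord_toType]
      exact aleph0_le_aleph _
    obtain ⟨K, hKmono, hKcl, hKcell⟩ := Statement14Aux.grid S n PUnit (fun _ => Set.univ)
      (by
        intro _
        rw [Cardinal.mk_univ, Cardinal.mk_ord_toType])
    set last : Fin (n + 1) := Fin.last n with hlast
    set pos : Fin (n + 1) → α → ℕ := fun i p => Statement14Aux.posOf (r i) p with hposdef
    set cell : α → Set (OmegaN n) := fun p =>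
      ⋂ i : Fin n, (K i (pos i.castSucc p + 1) \ K i (pos i.castSucc p)) with hcelldef
    have hcellinf : ∀ p, (cell p).Infinite := by
      intro p
      have h1 := hKcell (fun i => pos i.castSucc p) PUnit.unit
      rw [Set.inter_univ] at h1
      exact h1
    -- the greedy construction along the last order
    have main : ∀ k : ℕ, ∃ u : α → OmegaN n,
        ∀ p : α, pos last p < k →
          u p ∈ cell p ∧
          (∀ q, pos last q < pos last p → u q ≠ u p) ∧
          (∀ A ∈ 𝓕, (∀ a ∈ A, pos last a < pos last p) → u p ∉ S (A.image u)) := by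
      intro k
      induction k with
      | zero =>
        exact ⟨fun _ => Classical.arbitrary _, fun p hp => absurd hp (Nat.not_lt_zero _)⟩
      | succ k ih =>
        obtain ⟨u, hu⟩ := ih
        by_cases hex : ∃ p₀ : α, pos last p₀ = k
        · obtain ⟨p₀, hp₀⟩ := hex
          set bad : Finset (OmegaN n) :=
            ((Finset.univ.filter (fun q : α => pos last q < k)).image u) ∪
              ((𝓕.filter (fun A => ∀ a ∈ A, pos last a < k)).sup
                (fun A => S (A.image u))) with hbaddef
          obtain ⟨a, hacell, habad⟩ := ((hcellinf p₀).diff bad.finite_toSet).nonempty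
          rw [Finset.mem_coe] at habad
          have hne : ∀ q : α, q ≠ p₀ → Function.update u p₀ a q = u q :=
            fun q hq => Function.update_of_ne hq a u
          have himg : ∀ A : Finset α, p₀ ∉ A →
              A.image (Function.update u p₀ a) = A.image u := by
            intro A hA
            apply Finset.image_congr
            intro x hx
            exact hne x (fun h => hA (h ▸ hx))
          refine ⟨Function.update u p₀ a, ?_⟩
          intro p hp
          rcases Nat.lt_succ_iff_lt_or_eq.1 hp with hpk | hpk
          · -- old point
            have hpne : p ≠ p₀ := fun h => by rw [h, hp₀] at hpk; exact lt_irrefl k hpk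
            obtain ⟨h1, h2, h3⟩ := hu p hpk
            refine ⟨by rw [hne p hpne]; exact h1, ?_, ?_⟩
            · intro q hq
              have hqne : q ≠ p₀ := fun h => by
                rw [h, hp₀] at hq; omega
              rw [hne p hpne, hne q hqne]
              exact h2 q hq
            · intro A hA hAlow
              have hp₀A : p₀ ∉ A := fun hmem => by
                have := hAlow p₀ hmem
                omega
              rw [hne p hpne, himg A hp₀A]
              exact h3 A hA hAlow
          · -- the new point
            have hpp₀ : p = p₀ := by
              apply Statement14Aux.posOf_inj (r last)
              show pos last p = pos last p₀
              rw [hpk, hp₀]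
            subst hpp₀
            refine ⟨by rw [Function.update_self]; exact hacell, ?_, ?_⟩
            · intro q hq
              rw [hpk] at hq
              have hqne : q ≠ p := fun h => by rw [h] at hq; omega
              rw [hne q hqne, Function.update_self]
              intro heq
              apply habad
              apply Finset.mem_union_left
              rw [← heq]
              exact Finset.mem_image_of_mem u (Finset.mem_filter.2 ⟨Finset.mem_univ q, hq⟩)
            · intro A hA hAlow
              rw [hpk] at hAlow
              have hp₀A : p ∉ A := fun hmem => by
                have := hAlow p hmem
                rw [hp₀] at this
                omega
              rw [himg A hp₀A, Function.update_self]
              intro hmem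
              apply habad
              apply Finset.mem_union_right
              have hAfil : A ∈ 𝓕.filter (fun A => ∀ a ∈ A, pos last a < k) :=
                Finset.mem_filter.2 ⟨hA, hAlow⟩
              exact Finset.le_sup (f := fun A => S (A.image u)) hAfil hmem
        · -- no point at level k
          refine ⟨u, ?_⟩
          intro p hp
          rcases Nat.lt_succ_iff_lt_or_eq.1 hp with hpk | hpk
          · exact hu p hpk
          · exact absurd ⟨p, hpk⟩ hex
    obtain ⟨u, hu⟩ := main (Fintype.card α)
    have hup : ∀ p : α, u p ∈ cell p ∧
        (∀ q, pos last q < pos last p → u q ≠ u p) ∧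
        (∀ A ∈ 𝓕, (∀ a ∈ A, pos last a < pos last p) → u p ∉ S (A.image u)) :=
      fun p => hu p (Statement14Aux.posOf_lt_card (r last) p)
    -- the union of the family is everything
    have huniv : (Finset.univ : Finset α) ∈ 𝓕 := by
      rw [h𝓕]
      refine ⟨fun i => by letI := r i; exact Finset.univ.max' Finset.univ_nonempty, ?_⟩
      intro t
      simp only [Finset.mem_univ, true_iff]
      intro i
      letI := r i
      exact Finset.le_max' _ _ (Finset.mem_univ t)
    have hsup : 𝓕.sup id = Finset.univ := by
      apply le_antisymm
      · exact Finset.sup_le fun A _ => Finset.le_iff_subset.2 (Finset.subset_univ A)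
      · exact Finset.le_sup (f := id) huniv
    refine ⟨u, ?_, ?_⟩
    · intro p _ q _ hpq
      by_contra hne
      have hposne : pos last p ≠ pos last q :=
        fun h => hne (Statement14Aux.posOf_inj (r last) h)
      rcases Nat.lt_or_ge (pos last p) (pos last q) with h1 | h1
      · exact (hup q).2.1 p h1 hpq
      · exact (hup p).2.1 q (lt_of_le_of_ne h1 (Ne.symm hposne)) hpq.symm
    · intro A hA x hx
      rw [Finset.mem_inter, hsup] at hx
      obtain ⟨hx1, hx2⟩ := hx
      obtain ⟨p, -, rfl⟩ := Finset.mem_image.1 hx2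
      by_cases hpA : p ∈ A
      · exact Finset.mem_image_of_mem u hpA
      · exfalso
        obtain ⟨s, hs⟩ := (h𝓕 A).1 hA
        have hex : ∃ i, ¬ (r i).le p (s i) := by
          by_contra hc
          push_neg at hc
          exact hpA ((hs p).2 hc)
        obtain ⟨i, hi⟩ := hex
        have hlt : ∀ a ∈ A, (r i).lt a p := by
          intro a ha
          letI := r i
          exact lt_of_le_of_lt ((hs a).1 ha i) (not_le.1 hi)
        by_cases hin : (i : ℕ) < n
        · set i' : Fin n := ⟨i, hin⟩ with hi'
          have hci : i'.castSucc = i := by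
            apply Fin.ext
            simp [hi']
          have hsub : ↑(S (A.image u)) ⊆ K i' (pos i p) := by
            apply hKcl
            intro y hy
            obtain ⟨aa, haa, rfl⟩ := Finset.mem_image.1 (Finset.mem_coe.1 hy)
            have h2 : u aa ∈ K i' (pos i'.castSucc aa + 1) \ K i' (pos i'.castSucc aa) :=
              Set.mem_iInter.1 (hup aa).1 i'
            have h3 : pos i'.castSucc aa + 1 ≤ pos i'.castSucc p := by
              rw [hci]
              exact Statement14Aux.posOf_lt_posOf (r i) (hlt aa haa)
            have h4 := hKmono i' h3 h2.1
            rw [hci] at h4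
            exact h4
          have h5 : u p ∈ K i' (pos i'.castSucc p + 1) \ K i' (pos i'.castSucc p) :=
            Set.mem_iInter.1 (hup p).1 i'
          rw [hci] at h5
          exact h5.2 (hsub (Finset.mem_coe.2 hx1))
        · have hilast : i = last := by
            apply Fin.ext
            have := i.isLt
            simp only [hlast, Fin.val_last]
            omega
          rw [hilast] at hlt
          refine (hup p).2.2 A hA ?_ hx1
          intro a ha
          exact Statement14Aux.posOf_lt_posOf (r last) (hlt a ha)
  exact Nat.sInf_le hfree


end
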